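/- For every bounded distributive lattice L there exist a Boolean algebra B and an injective bounded lattice homomorphism e : L → B whose image generates B as a Boolean algebra. (Existence of the free Boolean extension Fr(L) of a bounded distributive lattice.) -/

import Mathlib

/-- `g` is an interior operator on the Boolean algebra `B`. -/
def IsInteriorOp {B : Type*} [BooleanAlgebra B] (g : B → B) : Prop :=
  (∀ x, g x ≤ x) ∧ (∀ x, g (g x) = g x) ∧ (∀ x y, g (x ⊓ y) = g x ⊓ g y) ∧ g ⊤ = ⊤

/-- Membership in the Boolean subalgebra generated by `S`. -/
inductive BoolGen {B : Type*} [BooleanAlgebra B] (S : Set B) : B → Prop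
  | base : ∀ x, x ∈ S → BoolGen S x
  | bot : BoolGen S ⊥
  | top : BoolGen S ⊤
  | inf : ∀ x y, BoolGen S x → BoolGen S y → BoolGen S (x ⊓ y)
  | sup : ∀ x y, BoolGen S x → BoolGen S y → BoolGen S (x ⊔ y)
  | compl : ∀ x, BoolGen S x → BoolGen S xᶜ

/-- `h` is a homomorphism of interior algebras from `(A, gA)` to `(B, gB)`. -/
def IsIAHom {A B : Type*} [BooleanAlgebra A] [BooleanAlgebra B]
    (gA : A → A) (gB : B → B) (h : A → B) : Prop :=
  (∀ x y, h (x ⊓ y) = h x ⊓ h y) ∧ (∀ x y, h (x ⊔ y) = h x ⊔ h y) ∧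
  (∀ x, h xᶜ = (h x)ᶜ) ∧ h ⊥ = ⊥ ∧ h ⊤ = ⊤ ∧ (∀ x, h (gA x) = gB (h x))

open Order in
theorem free_boolean_extension_exists {L : Type u} [DistribLattice L] [BoundedOrder L] :
    ∃ (B : Type u) (_ : BooleanAlgebra B) (e : L → B),
      Function.Injective e ∧ (∀ x y : L, e (x ⊓ y) = e x ⊓ e y) ∧
      (∀ x y : L, e (x ⊔ y) = e x ⊔ e y) ∧ e ⊥ = ⊥ ∧ e ⊤ = ⊤ ∧
      ∀ b : B, BoolGen (Set.range e) b := by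
  classical
  -- The space of prime ideals of `L`.
  let P := {I : Order.Ideal L // Order.Ideal.IsPrime I}
  -- The map sending `a` to the set of prime ideals not containing `a`.
  let e₀ : L → Set P := fun a => {I | a ∉ (I.1 : Set L)}
  have e0inf : ∀ a b : L, e₀ (a ⊓ b) = e₀ a ∩ e₀ b := by
    intro a b
    ext I
    simp only [e₀, Set.mem_setOf_eq, Set.mem_inter_iff, SetLike.mem_coe]
    constructor
    · intro h
      exact ⟨fun ha => h (I.1.lower inf_le_left ha), fun hb => h (I.1.lower inf_le_right hb)⟩
    · rintro ⟨ha, hb⟩ hab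
      rcases I.2.mem_or_mem hab with h | h
      · exact ha h
      · exact hb h
  have e0sup : ∀ a b : L, e₀ (a ⊔ b) = e₀ a ∪ e₀ b := by
    intro a b
    ext I
    simp only [e₀, Set.mem_setOf_eq, Set.mem_union, SetLike.mem_coe]
    constructor
    · intro h
      by_contra hc
      push_neg at hc
      exact h (I.1.sup_mem hc.1 hc.2)
    · rintro (h | h) hab
      · exact h (I.1.lower le_sup_left hab)
      · exact h (I.1.lower le_sup_right hab)
  have e0bot : e₀ ⊥ = (∅ : Set P) := by
    ext I
    simp [e₀, Order.Ideal.bot_mem]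
  have e0top : e₀ ⊤ = (Set.univ : Set P) := by
    ext I
    simp only [e₀, Set.mem_setOf_eq, Set.mem_univ, iff_true, SetLike.mem_coe]
    intro h
    exact I.2.toIsProper.ne_univ (I.1.top_of_top_mem h ▸ rfl)
  -- `e₀` reflects order, hence is injective.
  have e0le : ∀ a b : L, e₀ a ⊆ e₀ b → a ≤ b := by
    intro a b h
    by_contra hab
    have hdis : Disjoint ((Order.PFilter.principal a : Order.PFilter L) : Set L)
        ((Order.Ideal.principal b : Order.Ideal L) : Set L) := by
      rw [Set.disjoint_left]
      rintro x hx hx'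
      exact hab (le_trans (Order.PFilter.mem_principal.1 hx)
        (Order.Ideal.mem_principal.1 hx'))
    obtain ⟨J, hJp, hJb, hJd⟩ := DistribLattice.prime_ideal_of_disjoint_filter_ideal hdis
    have hbJ : b ∈ J := hJb (Order.Ideal.mem_principal.2 le_rfl)
    have haJ : a ∉ (J : Set L) := fun haJ =>
      Set.disjoint_left.1 hJd (Order.PFilter.mem_principal.2 le_rfl) haJ
    exact (h (show (⟨J, hJp⟩ : P) ∈ e₀ a from haJ)) hbJ
  have e0inj : Function.Injective e₀ := fun a b hab =>
    le_antisymm (e0le a b hab.le) (e0le b a hab.ge)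
  -- `B` is the Boolean subalgebra of `Set P` generated by the range of `e₀`.
  let S : Set (Set P) := Set.range e₀
  let B := {s : Set P // BoolGen S s}
  letI : Min B := ⟨fun x y => ⟨x.1 ⊓ y.1, BoolGen.inf _ _ x.2 y.2⟩⟩
  letI : Max B := ⟨fun x y => ⟨x.1 ⊔ y.1, BoolGen.sup _ _ x.2 y.2⟩⟩
  letI : Top B := ⟨⟨⊤, BoolGen.top⟩⟩
  letI : Bot B := ⟨⟨⊥, BoolGen.bot⟩⟩
  letI : Compl B := ⟨fun x => ⟨x.1ᶜ, BoolGen.compl _ x.2⟩⟩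
  letI : SDiff B := ⟨fun x y => ⟨x.1 \ y.1, by
    rw [sdiff_eq]; exact BoolGen.inf _ _ x.2 (BoolGen.compl _ y.2)⟩⟩
  letI : HImp B := ⟨fun x y => ⟨x.1 ⇨ y.1, by
    rw [himp_eq]; exact BoolGen.sup _ _ y.2 (BoolGen.compl _ x.2)⟩⟩
  letI instB : BooleanAlgebra B :=
    Function.Injective.booleanAlgebra (Subtype.val : B → Set P) Subtype.val_injective
      Iff.rfl Iff.rfl (fun _ _ => rfl) (fun _ _ => rfl) rfl rfl (fun _ => rfl) (fun _ _ => rfl) (fun _ _ => rfl)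
  let e : L → B := fun a => ⟨e₀ a, BoolGen.base _ ⟨a, rfl⟩⟩
  refine ⟨B, instB, e, ?_, ?_, ?_, ?_, ?_, ?_⟩
  · intro a b hab
    exact e0inj (congrArg Subtype.val hab)
  · intro a b; exact Subtype.ext (e0inf a b)
  · intro a b; exact Subtype.ext (e0sup a b)
  · exact Subtype.ext e0bot
  · exact Subtype.ext e0top
  · -- generation
    have key : ∀ s, BoolGen S s → ∀ h : BoolGen S s, BoolGen (Set.range e) (⟨s, h⟩ : B) := by
      intro s hs
      induction hs with
      | base x hx =>
        intro h
        obtain ⟨a, rfl⟩ := hx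
        exact BoolGen.base _ ⟨a, rfl⟩
      | bot => intro h; exact BoolGen.bot
      | top => intro h; exact BoolGen.top
      | inf x y hx hy ihx ihy =>
        intro h
        exact BoolGen.inf (⟨x, hx⟩ : B) ⟨y, hy⟩ (ihx hx) (ihy hy)
      | sup x y hx hy ihx ihy =>
        intro h
        exact BoolGen.sup (⟨x, hx⟩ : B) ⟨y, hy⟩ (ihx hx) (ihy hy)
      | compl x hx ihx =>
        intro h
        exact BoolGen.compl (⟨x, hx⟩ : B) (ihx hx)
    intro b
    have := key b.1 b.2 b.2
    exact this
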